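/- Let q ≥ 3, let d be an integer with s/2 < d < s, and let C be a d-uniform hypergraph on {1,…,s} (every edge of C has exactly d elements) such that its edge-removed hypergraph C* (which is (s−d)-uniform) contains the clutter of partite paths 𝔠_{s−d−1}(J_{(s−d)×2}). Then the minimum distance of the edge code of C is δ(C_C) = (q−2)^{s−d} (q−1)^d. -/

import Mathlib

open MvPolynomial

/-- The affine torus `T = (K*)^s`: points of `K^s` with all coordinates nonzero. -/
abbrev Torus (s : ℕ) (K : Type) [Zero K] := {P : Fin s → K // ∀ i, P i ≠ 0}

/-- The evaluation map `f ↦ (f(P))_{P ∈ T}` as a linear map. -/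
noncomputable def evalTorus (s : ℕ) (K : Type) [Field K] :
    MvPolynomial (Fin s) K →ₗ[K] (Torus s K → K) :=
  LinearMap.pi fun P => (aeval (P.1 : Fin s → K)).toLinearMap

/-- The edge code of a hypergraph with edge set `E` on vertex set `{1,…,s}`:
the image under evaluation of the span of the squarefree monomials `∏_{j ∈ e} t_j`. -/
noncomputable def edgeCode (s : ℕ) (K : Type) [Field K] (E : Set (Finset (Fin s))) :
    Submodule K (Torus s K → K) :=
  (Submodule.span K ((fun e : Finset (Fin s) => ∏ j ∈ e, X j) '' E)).map (evalTorus s K)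

/-- Hamming weight of a word indexed by the torus. -/
noncomputable def wt {s : ℕ} {K : Type} [Field K] (c : Torus s K → K) : ℕ :=
  {P | c P ≠ 0}.ncard

/-- Minimum distance of a linear code: the least Hamming weight of a nonzero codeword. -/
noncomputable def minDist {s : ℕ} {K : Type} [Field K] (C : Submodule K (Torus s K → K)) : ℕ :=
  sInf {w : ℕ | ∃ c ∈ C, c ≠ 0 ∧ wt c = w}

/-- A hypergraph with edge set `E` on `{1,…,s}` contains the clutter of partite paths
`𝔠_{m-1}(J_{m×2})`: there are `2m` distinct vertices `i_1,…,i_{2m}` such that for every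
`σ : {1,…,m} → {0,1}`, the `m`-set `{i_{2r-1+σ(r)} : r = 1,…,m}` is an edge. -/
def ContainsPartitePathClutter (s m : ℕ) (E : Finset (Finset (Fin s))) : Prop :=
  ∃ ι : Fin (2 * m) → Fin s, Function.Injective ι ∧
    ∀ σ : Fin m → Fin 2,
      (Finset.image
        (fun r : Fin m =>
          ι ⟨2 * (r : ℕ) + ((σ r : ℕ)),
            by have h1 := r.isLt; have h2 := (σ r).isLt; omega⟩)
        Finset.univ) ∈ E

set_option linter.unusedSectionVars false
set_option maxHeartbeats 1000000
open Finset

section Core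
variable {K : Type} [Field K] [Fintype K] [DecidableEq K]

/-- multilinear evaluation of a coefficient function indexed by `Fin n → Bool` -/
def Phi {n : ℕ} (c : (Fin n → Bool) → K) (P : Fin n → K) : K :=
  ∑ m : Fin n → Bool, c m * ∏ i, (if m i then P i else 1)

/-- number of torus points where `Phi c` is nonzero -/
def Ncnt {n : ℕ} (c : (Fin n → Bool) → K) : ℕ :=
  (univ.filter fun P : Fin n → K => (∀ i, P i ≠ 0) ∧ Phi c P ≠ 0).card

def degB {n : ℕ} (m : Fin n → Bool) : ℕ := ∑ i, (if m i then 1 else 0)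

def gOf {n : ℕ} (c : (Fin (n+1) → Bool) → K) : (Fin n → Bool) → K := fun M => c (Fin.cons true M)
def hOf {n : ℕ} (c : (Fin (n+1) → Bool) → K) : (Fin n → Bool) → K := fun M => c (Fin.cons false M)

def cInv {n : ℕ} (c : (Fin n → Bool) → K) : (Fin n → Bool) → K :=
  fun m => c (fun i => !(m i))

lemma Phi_cons {n : ℕ} (c : (Fin (n+1) → Bool) → K) (a : K) (Q : Fin n → K) :
    Phi c (Fin.cons a Q) = a * Phi (gOf c) Q + Phi (hOf c) Q := by
  unfold Phi
  rw [← (Fin.consEquiv (fun _ => Bool)).sum_comp (fun m => c m * ∏ i, (if m i then (Fin.cons a Q) i else 1))]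
  rw [Fintype.sum_prod_type]
  rw [Fintype.sum_bool]
  simp only [Fin.consEquiv, Equiv.coe_fn_mk]
  have key : ∀ (b : Bool) (M : Fin n → Bool),
      (∏ i, (if (Fin.cons b M : Fin (n+1) → Bool) i then (Fin.cons a Q) i else 1)) =
        (if b then a else 1) * ∏ i, (if M i then Q i else 1) := by
    intro b M
    rw [Fin.prod_univ_succ]
    simp
  rw [Finset.mul_sum]
  congr 1
  · apply Finset.sum_congr rfl; intro M _
    erw [key]; unfold gOf; ring_nf; simp [mul_comm, mul_assoc, mul_left_comm]
  · apply Finset.sum_congr rfl; intro M _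
    erw [key]; unfold hOf; simp

lemma sum_fiber {n : ℕ} (p : (Fin (n+1) → K) → Prop) [DecidablePred p] :
    (univ.filter p).card = ∑ Q : Fin n → K, (univ.filter fun a : K => p (Fin.cons a Q)).card := by
  rw [Finset.card_filter]
  rw [← (Fin.consEquiv (fun _ => K)).sum_comp (fun P => if p P then 1 else 0)]
  rw [Fintype.sum_prod_type]
  rw [Finset.sum_comm]
  apply Finset.sum_congr rfl
  intro Q _
  rw [Finset.card_filter]
  rfl

-- count of good a's: at least q-2 if G ≠ 0

lemma card_a_ge (G H : K) (hG : G ≠ 0) :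
    Fintype.card K - 2 ≤ (univ.filter fun a : K => a ≠ 0 ∧ a * G + H ≠ 0).card := by
  have hsub : univ.filter (fun a : K => a ∉ ({0, -H * G⁻¹} : Finset K)) ⊆
      univ.filter fun a : K => a ≠ 0 ∧ a * G + H ≠ 0 := by
    intro a ha
    simp only [mem_filter, mem_insert, mem_singleton, mem_univ, true_and] at ha ⊢
    push_neg at ha
    refine ⟨ha.1, fun hz => ha.2 ?_⟩
    field_simp
    linear_combination hz
  refine le_trans ?_ (Finset.card_le_card hsub)
  rw [Finset.filter_not, Finset.filter_mem_eq_inter, Finset.univ_inter,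
    Finset.card_sdiff_of_subset (Finset.subset_univ _)]
  have : ({0, -H * G⁻¹} : Finset K).card ≤ 2 := by
    apply le_trans (Finset.card_insert_le _ _); simp
  simp only [Finset.card_univ]
  omega

lemma card_a_eq (H : K) (hH : H ≠ 0) :
    (univ.filter fun a : K => a ≠ 0 ∧ a * 0 + H ≠ 0).card = Fintype.card K - 1 := by
  have : (univ.filter fun a : K => a ≠ 0 ∧ a * 0 + H ≠ 0) = univ.filter fun a : K => a ≠ 0 := by
    apply filter_congr; intro a _; simp [hH]
  rw [this, Finset.filter_ne', Finset.card_erase_of_mem (mem_univ _), Finset.card_univ]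

lemma Ncnt_eq_sum {n : ℕ} (c : (Fin (n+1) → Bool) → K) :
    Ncnt c = ∑ Q : Fin n → K, (univ.filter fun a : K =>
      (a ≠ 0 ∧ ∀ i, Q i ≠ 0) ∧ a * Phi (gOf c) Q + Phi (hOf c) Q ≠ 0).card := by
  unfold Ncnt
  rw [sum_fiber]
  apply Finset.sum_congr rfl
  intro Q _
  apply Finset.card_bij (fun a _ => a) <;> intro a <;>
    simp only [mem_filter, mem_univ, true_and]
  · intro h
    rw [Fin.forall_fin_succ] at h
    rw [Phi_cons] at h
    simpa using h
  · intro b ha hb h; exact h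
  · intro h
    refine ⟨a, ?_, rfl⟩
    rw [Fin.forall_fin_succ, Phi_cons]
    simpa using h

lemma Ncnt_ge_g {n : ℕ} (c : (Fin (n+1) → Bool) → K) :
    (Fintype.card K - 2) * Ncnt (gOf c) ≤ Ncnt c := by
  rw [Ncnt_eq_sum]
  unfold Ncnt
  rw [Finset.card_eq_sum_ones, Finset.sum_filter, Finset.mul_sum]
  refine Finset.sum_le_sum fun Q _ => ?_
  by_cases hQ : (∀ i, Q i ≠ 0) ∧ Phi (gOf c) Q ≠ 0
  · simp only [if_pos hQ, mul_one]
    refine le_trans (card_a_ge _ (Phi (hOf c) Q) hQ.2) (Finset.card_le_card ?_)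
    intro a ha
    simp only [mem_filter, mem_univ, true_and] at ha ⊢
    exact ⟨⟨ha.1, hQ.1⟩, ha.2⟩
  · rw [if_neg (by simpa using hQ)]; exact Nat.zero_le _

lemma Ncnt_ge_h {n : ℕ} (c : (Fin (n+1) → Bool) → K) (hg : gOf c = 0) :
    (Fintype.card K - 1) * Ncnt (hOf c) ≤ Ncnt c := by
  rw [Ncnt_eq_sum]
  unfold Ncnt
  rw [Finset.card_eq_sum_ones, Finset.sum_filter, Finset.mul_sum]
  refine Finset.sum_le_sum fun Q _ => ?_
  by_cases hQ : (∀ i, Q i ≠ 0) ∧ Phi (hOf c) Q ≠ 0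
  · simp only [if_pos hQ, mul_one]
    have hG : Phi (gOf c) Q = 0 := by simp [hg, Phi]
    rw [hG]
    rw [← card_a_eq (K := K) (Phi (hOf c) Q) hQ.2]
    apply Finset.card_le_card
    intro a ha
    simp only [mem_filter, mem_univ, true_and, mul_zero] at ha ⊢
    exact ⟨⟨ha.1, hQ.1⟩, by simpa using ha.2⟩
  · rw [if_neg (by simpa using hQ)]; exact Nat.zero_le _

lemma cInv_cInv {n : ℕ} (c : (Fin n → Bool) → K) : cInv (cInv c) = c := by
  funext m; simp [cInv]

lemma degB_not {n : ℕ} (m : Fin n → Bool) : degB (fun i => !(m i)) + degB m = n := by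
  unfold degB
  rw [← Finset.sum_add_distrib]
  have h1 : ∀ i : Fin n, ((if !(m i) then 1 else 0) + if m i then 1 else 0) = 1 := by
    intro i; cases m i <;> simp
  calc ∑ i : Fin n, ((if (fun i => !m i) i = true then 1 else 0) + if m i = true then 1 else 0)
      = ∑ _i : Fin n, 1 := Finset.sum_congr rfl (fun i _ => h1 i)
    _ = n := by simp

lemma Phi_inv {n : ℕ} (c : (Fin n → Bool) → K) (P : Fin n → K) (hP : ∀ i, P i ≠ 0) :
    Phi (cInv c) P = (∏ i, P i) * Phi c (fun i => (P i)⁻¹) := by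
  unfold Phi cInv
  rw [Finset.mul_sum]
  have hbij : Function.Bijective (fun (m : Fin n → Bool) => fun i => !(m i)) :=
    Function.Involutive.bijective (fun m => by funext i; simp)
  apply Fintype.sum_bijective _ hbij
  intro m
  simp only [Bool.not_not]
  rw [mul_left_comm, ← Finset.prod_mul_distrib]
  congr 1
  apply Finset.prod_congr rfl
  intro i _
  cases hm : m i <;> simp [hm, mul_inv_cancel₀ (hP i)]

lemma Ncnt_inv_le {n : ℕ} (c : (Fin n → Bool) → K) : Ncnt c ≤ Ncnt (cInv c) := by
  unfold Ncnt
  apply Finset.card_le_card_of_injOn (fun P => fun i => (P i)⁻¹)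
  · intro P hP
    simp only [mem_coe, mem_filter, mem_univ, true_and] at hP ⊢
    have h1 : ∀ i, (P i)⁻¹ ≠ 0 := fun i => inv_ne_zero (hP.1 i)
    refine ⟨h1, ?_⟩
    rw [Phi_inv _ _ h1]
    simp only [inv_inv]
    exact mul_ne_zero (Finset.prod_ne_zero_iff.2 fun i _ => h1 i) hP.2
  · intro P _ R _ h
    funext i
    have h2 := congrFun h i
    simp only at h2
    rw [← inv_inv (P i), ← inv_inv (R i), h2]

lemma Ncnt_inv {n : ℕ} (c : (Fin n → Bool) → K) : Ncnt (cInv c) = Ncnt c := by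
  refine le_antisymm ?_ (Ncnt_inv_le c)
  have := Ncnt_inv_le (cInv c)
  rwa [cInv_cInv] at this

lemma degB_cons {n : ℕ} (b : Bool) (M : Fin n → Bool) :
    degB (Fin.cons b M) = (if b then 1 else 0) + degB M := by
  unfold degB
  rw [Fin.sum_univ_succ]
  simp

lemma degB_eq_zero {n : ℕ} (m : Fin n → Bool) (h : degB m = 0) : m = fun _ => false := by
  funext i
  by_contra hi
  have : m i = true := by simpa using hi
  have : (1:ℕ) ≤ degB m := by
    unfold degB
    calc (1:ℕ) = if m i then 1 else 0 := by simp [this]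
    _ ≤ _ := Finset.single_le_sum (f := fun j => if m j then (1:ℕ) else 0)
        (fun j _ => by positivity) (mem_univ i)
  omega

lemma card_ne_zero_filter : (univ.filter fun a : K => a ≠ 0).card = Fintype.card K - 1 := by
  rw [Finset.filter_ne', Finset.card_erase_of_mem (mem_univ _), Finset.card_univ]

lemma key0 {n : ℕ} (c : (Fin n → Bool) → K) (hc : c ≠ 0)
    (hs : ∀ m, c m ≠ 0 → degB m = 0) : Ncnt c = (Fintype.card K - 1) ^ n := by
  have hm0 : ∀ m : Fin n → Bool, m ≠ (fun _ => false) → c m = 0 := by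
    intro m hm
    by_contra h
    exact hm (degB_eq_zero m (hs m h))
  have hc0 : c (fun _ => false) ≠ 0 := by
    by_contra h
    apply hc
    funext m
    by_cases hm : m = fun _ => false
    · rw [hm]; exact h
    · exact hm0 m hm
  have hPhi : ∀ P : Fin n → K, Phi c P = c (fun _ => false) := by
    intro P
    unfold Phi
    rw [Finset.sum_eq_single (fun _ => false)]
    · simp
    · intro m _ hm; rw [hm0 m hm, zero_mul]
    · simp
  have : (univ.filter fun P : Fin n → K => (∀ i, P i ≠ 0) ∧ Phi c P ≠ 0) =
      Fintype.piFinset (fun _ : Fin n => univ.filter fun a : K => a ≠ 0) := by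
    ext P
    simp [Fintype.mem_piFinset, hPhi, hc0]
  unfold Ncnt
  rw [this, Fintype.card_piFinset]
  simp [card_ne_zero_filter]

lemma keyA : ∀ (n e : ℕ) (c : (Fin n → Bool) → K), c ≠ 0 →
    (∀ m, c m ≠ 0 → degB m = e) → 2*e ≤ n →
    (Fintype.card K - 2)^e * (Fintype.card K - 1)^(n-e) ≤ Ncnt c := by
  intro n
  induction n with
  | zero =>
    intro e c hc hs h2
    have he : e = 0 := by omega
    subst he
    rw [key0 c hc hs]
    simp
  | succ n IH =>
    intro e c hc hs h2
    match e with
    | 0 => rw [key0 c hc hs]; simp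
    | e+1 =>
      by_cases hg : gOf c = (0 : (Fin n → Bool) → K)
      · -- the coefficient of the extra variable vanishes
        have hh : hOf c ≠ 0 := by
          intro h0
          apply hc
          funext m
          have hm := (Fin.cons_self_tail m).symm
          rcases hb : m 0 with _ | _
          · have : m = Fin.cons false (Fin.tail m) := by rw [← hb]; exact hm
            rw [this]
            exact congrFun h0 (Fin.tail m)
          · have : m = Fin.cons true (Fin.tail m) := by rw [← hb]; exact hm
            rw [this]
            exact congrFun hg (Fin.tail m)
        have hsupp : ∀ M : Fin n → Bool, hOf c M ≠ 0 → degB M = e+1 := by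
          intro M hM
          have := hs _ hM
          rw [degB_cons] at this
          simpa using this
        by_cases hsplit : 2*(e+1) ≤ n
        · have hb := IH (e+1) (hOf c) hh hsupp hsplit
          have h3 := Ncnt_ge_h c hg
          calc (Fintype.card K - 2)^(e+1) * (Fintype.card K - 1)^(n+1-(e+1))
              = (Fintype.card K - 1) * ((Fintype.card K - 2)^(e+1) * (Fintype.card K - 1)^(n-(e+1))) := by
                have : n+1-(e+1) = (n-(e+1)) + 1 := by omega
                rw [this, pow_succ]; ring
            _ ≤ (Fintype.card K - 1) * Ncnt (hOf c) := Nat.mul_le_mul_left _ hb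
            _ ≤ Ncnt c := h3
        · have hn : n = 2*e+1 := by omega
          have hinv : cInv (hOf c) ≠ 0 := by
            intro h0
            apply hh
            funext M
            have := congrFun h0 (fun i => !(M i))
            simp only [cInv, Bool.not_not] at this
            simpa using this
          have hsupp2 : ∀ M : Fin n → Bool, cInv (hOf c) M ≠ 0 → degB M = e := by
            intro M hM
            have h4 : degB (fun i => !(M i)) = e + 1 := hsupp _ hM
            have h5 := degB_not M
            omega
          have hb := IH e (cInv (hOf c)) hinv hsupp2 (by omega)
          rw [Ncnt_inv] at hb
          have h3 := Ncnt_ge_h c hg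
          have key : (Fintype.card K - 2)^(e+1) * (Fintype.card K - 1)^(n+1-(e+1)) ≤
              (Fintype.card K - 1) * ((Fintype.card K - 2)^e * (Fintype.card K - 1)^(n-e)) := by
            have h6 : n+1-(e+1) = e+1 := by omega
            have h7 : n-e = e+1 := by omega
            rw [h6, h7, pow_succ, pow_succ]
            have : Fintype.card K - 2 ≤ Fintype.card K - 1 := by omega
            calc (Fintype.card K - 2)^e * (Fintype.card K - 2) * ((Fintype.card K - 1)^e * (Fintype.card K - 1))
                ≤ (Fintype.card K - 2)^e * (Fintype.card K - 1) * ((Fintype.card K - 1)^e * (Fintype.card K - 1)) := by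
                  apply Nat.mul_le_mul_right
                  exact Nat.mul_le_mul_left _ this
              _ = (Fintype.card K - 1) * ((Fintype.card K - 2)^e * ((Fintype.card K - 1)^e * (Fintype.card K - 1))) := by ring
          refine le_trans key (le_trans ?_ h3)
          exact Nat.mul_le_mul_left _ hb
      · -- g ≠ 0
        have hsupp : ∀ M : Fin n → Bool, gOf c M ≠ 0 → degB M = e := by
          intro M hM
          have := hs _ hM
          rw [degB_cons] at this
          simp only [if_pos] at this
          omega
        have hb := IH e (gOf c) hg hsupp (by omega)
        have h3 := Ncnt_ge_g c
        calc (Fintype.card K - 2)^(e+1) * (Fintype.card K - 1)^(n+1-(e+1))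
            = (Fintype.card K - 2) * ((Fintype.card K - 2)^e * (Fintype.card K - 1)^(n-e)) := by
              have : n+1-(e+1) = n-e := by omega
              rw [this, pow_succ]; ring
          _ ≤ (Fintype.card K - 2) * Ncnt (gOf c) := Nat.mul_le_mul_left _ hb
          _ ≤ Ncnt c := h3

/-- the main lower bound for high degree: `d ≤ n ≤ 2d` -/
lemma keyB (n d : ℕ) (c : (Fin n → Bool) → K) (hc : c ≠ 0)
    (hs : ∀ m, c m ≠ 0 → degB m = d) (hd1 : d ≤ n) (hd2 : n ≤ 2*d) :
    (Fintype.card K - 2)^(n-d) * (Fintype.card K - 1)^d ≤ Ncnt c := by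
  have hinv : cInv c ≠ 0 := by
    intro h0
    apply hc
    funext M
    have := congrFun h0 (fun i => !(M i))
    simp only [cInv, Bool.not_not] at this
    simpa using this
  have hsupp : ∀ m : Fin n → Bool, cInv c m ≠ 0 → degB m = n - d := by
    intro m hm
    have h4 : degB (fun i => !(m i)) = d := hs _ hm
    have h5 := degB_not m
    omega
  have hb := keyA n (n-d) (cInv c) hinv hsupp (by omega)
  rw [Ncnt_inv] at hb
  have : n - (n - d) = d := by omega
  rwa [this] at hb

end Core

section Bridge
open MvPolynomial
variable {s : ℕ} {K : Type} [Field K] [Fintype K] [DecidableEq K]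

lemma codeword_phi (E : Set (Finset (Fin s))) (d : ℕ)
    (hU : ∀ e ∈ E, e.card = d)
    (f : MvPolynomial (Fin s) K)
    (hf : f ∈ Submodule.span K ((fun e : Finset (Fin s) => ∏ j ∈ e, X j) '' E)) :
    ∃ c : (Fin s → Bool) → K, (∀ m, c m ≠ 0 → degB m = d) ∧
      ∀ P : Fin s → K, MvPolynomial.aeval P f = Phi c P := by
  induction hf using Submodule.span_induction with
  | mem x hx =>
    obtain ⟨e, he, rfl⟩ := hx
    refine ⟨fun m => if m = (fun j => decide (j ∈ e)) then 1 else 0, ?_, ?_⟩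
    · intro m hm
      have hme : m = fun j => decide (j ∈ e) := by
        by_contra h; simp [h] at hm
      subst hme
      unfold degB
      have : ∀ i : Fin s, (if decide (i ∈ e) then (1:ℕ) else 0) = if i ∈ e then 1 else 0 := by
        intro i; by_cases h : i ∈ e <;> simp [h]
      rw [Finset.sum_congr rfl (fun i _ => this i), Finset.sum_ite_mem, Finset.univ_inter,
        Finset.sum_const, smul_eq_mul, mul_one]
      exact hU e he
    · intro P
      rw [map_prod]
      simp only [aeval_X]
      unfold Phi
      rw [Finset.sum_eq_single (fun j => decide (j ∈ e))]
      · beta_reduce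
        rw [if_pos rfl, one_mul]
        have : ∀ i : Fin s, (if decide (i ∈ e) then P i else 1) = if i ∈ e then P i else 1 := by
          intro i; by_cases h : i ∈ e <;> simp [h]
        rw [Finset.prod_congr rfl (fun i _ => this i), Finset.prod_ite_mem, Finset.univ_inter]
      · intro m _ hm; beta_reduce; rw [if_neg hm, zero_mul]
      · simp
  | zero =>
    refine ⟨0, by simp, fun P => ?_⟩
    simp [Phi]
  | add x y hx hy ihx ihy =>
    obtain ⟨c1, hs1, he1⟩ := ihx
    obtain ⟨c2, hs2, he2⟩ := ihy
    refine ⟨c1 + c2, ?_, fun P => ?_⟩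
    · intro m hm
      by_cases h1 : c1 m ≠ 0
      · exact hs1 m h1
      · push_neg at h1
        apply hs2 m
        intro h2
        apply hm
        simp [Pi.add_apply, h1, h2]
    · rw [map_add, he1, he2]
      unfold Phi
      rw [← Finset.sum_add_distrib]
      apply Finset.sum_congr rfl
      intro m _
      simp [add_mul]
  | smul a x hx ihx =>
    obtain ⟨c1, hs1, he1⟩ := ihx
    refine ⟨a • c1, ?_, fun P => ?_⟩
    · intro m hm
      apply hs1 m
      intro h1
      apply hm
      simp [h1]
    · rw [map_smul, smul_eq_mul, he1]
      unfold Phi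
      rw [Finset.mul_sum]
      apply Finset.sum_congr rfl
      intro m _
      simp [mul_assoc]

lemma wt_eq_card (w : Torus s K → K) (v : (Fin s → K) → K)
    (hv : ∀ P : Torus s K, w P = v P.1) :
    wt w = (Finset.univ.filter fun P : Fin s → K => (∀ i, P i ≠ 0) ∧ v P ≠ 0).card := by
  unfold wt
  rw [← Nat.card_coe_set_eq]
  rw [← Fintype.card_subtype]
  rw [Nat.card_eq_fintype_card]
  apply Fintype.card_congr
  refine ⟨fun x => ⟨x.1.1, x.1.2, by rw [← hv]; exact x.2⟩,
    fun x => ⟨⟨x.1, x.2.1⟩, by show w _ ≠ 0; rw [hv]; exact x.2.2⟩, ?_, ?_⟩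
  · intro x; rfl
  · intro x; rfl

end Bridge

section Count
variable {K : Type} [Field K] [Fintype K] [DecidableEq K]

lemma card_ne_zero_filter' : (univ.filter fun a : K => a ≠ 0).card = Fintype.card K - 1 := by
  rw [Finset.filter_ne', Finset.card_erase_of_mem (mem_univ _), Finset.card_univ]

lemma card_pairT : Fintype.card {p : K × K // p.1 ≠ 0 ∧ p.2 ≠ 0 ∧ p.1 ≠ p.2} =
    (Fintype.card K - 1) * (Fintype.card K - 2) := by
  rw [Fintype.card_subtype]
  rw [Finset.card_filter]
  rw [Fintype.sum_prod_type]
  have step : ∀ x : K, (∑ y : K, if x ≠ 0 ∧ y ≠ 0 ∧ x ≠ y then 1 else 0) =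
      if x = 0 then 0 else Fintype.card K - 2 := by
    intro x
    by_cases hx : x = 0
    · simp [hx]
    · rw [if_neg hx]
      rw [← Finset.card_filter]
      have : (univ.filter fun y : K => x ≠ 0 ∧ y ≠ 0 ∧ x ≠ y) =
          univ.filter fun y : K => y ∉ ({0, x} : Finset K) := by
        apply filter_congr
        intro y _
        simp only [mem_insert, mem_singleton]
        constructor
        · rintro ⟨_, h2, h3⟩ h; rcases h with h | h; exact h2 h; exact h3 h.symm
        · intro h; push_neg at h; exact ⟨hx, h.1, fun he => h.2 he.symm⟩
      rw [this, Finset.filter_not, Finset.filter_mem_eq_inter, Finset.univ_inter,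
        Finset.card_sdiff_of_subset (Finset.subset_univ _), Finset.card_pair (fun h : (0:K) = x => hx h.symm), Finset.card_univ]
  rw [Finset.sum_congr rfl (fun x _ => step x)]
  rw [← Finset.sum_filter_add_sum_filter_not univ (fun x : K => x = 0)]
  have h1 : ∑ x ∈ univ.filter (fun x : K => x = 0), (if x = 0 then 0 else Fintype.card K - 2) = 0 := by
    apply Finset.sum_eq_zero; intro x hx; simp only [mem_filter] at hx; simp [hx.2]
  have h2 : ∑ x ∈ univ.filter (fun x : K => ¬ x = 0), (if x = 0 then 0 else Fintype.card K - 2) =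
      (Fintype.card K - 1) * (Fintype.card K - 2) := by
    rw [Finset.sum_congr rfl (fun x hx => by
      simp only [mem_filter] at hx; rw [if_neg hx.2])]
    rw [Finset.sum_const, smul_eq_mul]
    congr 1
    exact card_ne_zero_filter'
  rw [h1, h2, zero_add]

variable {s m : ℕ} (ι : Fin (2*m) → Fin s)

noncomputable def recon (F : Fin m → K × K) (G : {j : Fin s // j ∉ Set.range ι} → K) :
    Fin s → K :=
  fun j =>
    if h : ∃ k, ι k = j then
      (if ((h.choose : Fin (2*m)) : ℕ) % 2 = 1 then
        (F ⟨((h.choose : Fin (2*m)) : ℕ)/2, by have := (h.choose : Fin (2*m)).isLt; omega⟩).1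
      else
        (F ⟨((h.choose : Fin (2*m)) : ℕ)/2, by have := (h.choose : Fin (2*m)).isLt; omega⟩).2)
    else G ⟨j, by simpa [Set.mem_range] using h⟩

lemma recon_apply_mem (hι : Function.Injective ι) (F : Fin m → K × K)
    (G : {j : Fin s // j ∉ Set.range ι} → K) (k : Fin (2*m)) :
    recon ι F G (ι k) = (if (k : ℕ) % 2 = 1 then
        (F ⟨(k : ℕ)/2, by have := k.isLt; omega⟩).1
      else (F ⟨(k : ℕ)/2, by have := k.isLt; omega⟩).2) := by
  unfold recon
  have h : ∃ k', ι k' = ι k := ⟨k, rfl⟩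
  rw [dif_pos h]
  have hc : h.choose = k := hι h.choose_spec
  simp only [hc]

lemma recon_apply_not_mem (F : Fin m → K × K)
    (G : {j : Fin s // j ∉ Set.range ι} → K) (j : Fin s) (hj : j ∉ Set.range ι) :
    recon ι F G j = G ⟨j, hj⟩ := by
  unfold recon
  rw [dif_neg (by simpa [Set.mem_range] using hj)]

lemma count_torus_pairs (hm : 2*m ≤ s) (hι : Function.Injective ι) :
    (Finset.univ.filter fun P : Fin s → K => (∀ i, P i ≠ 0) ∧
        ∀ r : Fin m, P (ι ⟨2*(r:ℕ)+1, by have := r.isLt; omega⟩) ≠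
          P (ι ⟨2*(r:ℕ), by have := r.isLt; omega⟩)).card
      = (Fintype.card K - 2)^m * (Fintype.card K - 1)^(s-m) := by
  rw [← Fintype.card_subtype]
  have e1 : {P : Fin s → K // (∀ i, P i ≠ 0) ∧
        ∀ r : Fin m, P (ι ⟨2*(r:ℕ)+1, by have := r.isLt; omega⟩) ≠
          P (ι ⟨2*(r:ℕ), by have := r.isLt; omega⟩)} ≃
      ((Fin m → {p : K × K // p.1 ≠ 0 ∧ p.2 ≠ 0 ∧ p.1 ≠ p.2}) ×
        ({j : Fin s // j ∉ Set.range ι} → {x : K // x ≠ 0})) := by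
    refine ⟨fun P => (fun r => ⟨(P.1 (ι ⟨2*(r:ℕ)+1, by have := r.isLt; omega⟩),
        P.1 (ι ⟨2*(r:ℕ), by have := r.isLt; omega⟩)), P.2.1 _, P.2.1 _, P.2.2 r⟩,
      fun j => ⟨P.1 j.1, P.2.1 _⟩),
      fun FG => ⟨recon ι (fun r => (FG.1 r).1) (fun j => (FG.2 j).1), ?_, ?_⟩, ?_, ?_⟩
    · -- all coordinates nonzero
      intro j
      by_cases hj : j ∈ Set.range ι
      · obtain ⟨k, rfl⟩ := hj
        rw [recon_apply_mem ι hι]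
        split
        · exact (FG.1 _).2.1
        · exact (FG.1 _).2.2.1
      · rw [recon_apply_not_mem ι _ _ j hj]
        exact (FG.2 _).2
    · -- pair coordinates differ
      intro r
      rw [recon_apply_mem ι hι, recon_apply_mem ι hι]
      have h1 : (2*(r:ℕ)+1) % 2 = 1 := by omega
      have h2 : (2*(r:ℕ)) % 2 ≠ 1 := by omega
      rw [if_pos h1, if_neg h2]
      have h3 : (2*(r:ℕ)+1)/2 = (r:ℕ) := by omega
      have h4 : (2*(r:ℕ))/2 = (r:ℕ) := by omega
      simp only [h3, h4]
      have := (FG.1 ⟨(r:ℕ), r.isLt⟩).2.2.2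
      simpa using this
    · -- left inverse
      intro P
      apply Subtype.ext
      funext j
      dsimp only
      by_cases hj : j ∈ Set.range ι
      · obtain ⟨k, rfl⟩ := hj
        rw [recon_apply_mem ι hι]
        have hk := k.isLt
        split
        · next hpar =>
          have : (⟨2*((k:ℕ)/2)+1, by omega⟩ : Fin (2*m)) = k := by
            apply Fin.ext; simp; omega
          simp only [this]
        · next hpar =>
          have : (⟨2*((k:ℕ)/2), by omega⟩ : Fin (2*m)) = k := by
            apply Fin.ext; simp; omega
          simp only [this]
      · rw [recon_apply_not_mem ι _ _ j hj]
    · -- right inverse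
      intro FG
      apply Prod.ext
      · funext r
        apply Subtype.ext
        apply Prod.ext <;>
        · dsimp only
          rw [recon_apply_mem ι hι]
          simp only [Fin.val_mk]
          have h1 : (2*(r:ℕ)+1) % 2 = 1 := by omega
          have h2 : (2*(r:ℕ)) % 2 ≠ 1 := by omega
          have h3 : (2*(r:ℕ)+1)/2 = (r:ℕ) := by omega
          have h4 : (2*(r:ℕ))/2 = (r:ℕ) := by omega
          first
          | (rw [if_pos h1]; simp only [h3, Fin.eta])
          | (rw [if_neg h2]; simp only [h4, Fin.eta])
      · funext j
        apply Subtype.ext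
        dsimp only
        rw [recon_apply_not_mem ι _ _ j.1 j.2]
  rw [Fintype.card_congr e1]
  rw [Fintype.card_prod, Fintype.card_fun, Fintype.card_fun]
  have c1 : Fintype.card {p : K × K // p.1 ≠ 0 ∧ p.2 ≠ 0 ∧ p.1 ≠ p.2} =
      (Fintype.card K - 1) * (Fintype.card K - 2) := card_pairT
  have c2 : Fintype.card {x : K // x ≠ 0} = Fintype.card K - 1 := by
    rw [Fintype.card_subtype]
    exact card_ne_zero_filter'
  have c3 : Fintype.card {j : Fin s // j ∉ Set.range ι} = s - 2*m := by
    rw [Fintype.card_subtype_compl]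
    have : Fintype.card {j : Fin s // j ∈ Set.range ι} = 2*m := by
      rw [Fintype.card_congr (Equiv.ofInjective ι hι).symm, Fintype.card_fin]
    rw [this, Fintype.card_fin]
  rw [c1, c2, c3]
  simp only [Fintype.card_fin]
  rw [mul_pow]
  have h5 : m + (s - 2*m) = s - m := by omega
  rw [mul_comm ((Fintype.card K - 1)^m) ((Fintype.card K - 2)^m), mul_assoc, ← pow_add, h5]

end Count


section Exp
variable {K : Type} [Field K]

lemma exp_lemma : ∀ (m : ℕ) (x : Fin m → Fin 2 → K),
    ∑ σ : Fin m → Fin 2, (-1:K)^(∑ r, ((σ r : ℕ))) * ∏ r, x r (σ r) =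
      ∏ r, (x r 0 - x r 1) := by
  intro m
  induction m with
  | zero =>
    intro x
    simp
  | succ n IH =>
    intro x
    rw [← (Fin.consEquiv (fun _ => Fin 2)).sum_comp
      (fun σ => (-1:K)^(∑ r, ((σ r : ℕ))) * ∏ r, x r (σ r))]
    rw [Fintype.sum_prod_type]
    have key : ∀ (b : Fin 2) (τ : Fin n → Fin 2),
        (-1:K)^(∑ r, (((Fin.cons b τ : Fin (n+1) → Fin 2) r : ℕ))) *
          ∏ r, x r ((Fin.cons b τ : Fin (n+1) → Fin 2) r) =
        ((-1:K)^(b:ℕ) * x 0 b) * ((-1:K)^(∑ r, ((τ r : ℕ))) * ∏ r, x r.succ (τ r)) := by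
      intro b τ
      rw [Fin.sum_univ_succ, Fin.prod_univ_succ]
      simp only [Fin.cons_zero, Fin.cons_succ, pow_add]
      ring
    calc ∑ b : Fin 2, ∑ τ : Fin n → Fin 2,
          (-1:K)^(∑ r, (((Fin.consEquiv (fun _ => Fin 2)) (b, τ) r : ℕ))) *
            ∏ r, x r ((Fin.consEquiv (fun _ => Fin 2)) (b, τ) r)
        = ∑ b : Fin 2, ((-1:K)^(b:ℕ) * x 0 b) *
            ∑ τ : Fin n → Fin 2, (-1:K)^(∑ r, ((τ r : ℕ))) * ∏ r, x r.succ (τ r) := by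
          apply Finset.sum_congr rfl
          intro b _
          rw [Finset.mul_sum]
          exact Finset.sum_congr rfl (fun τ _ => key b τ)
      _ = ∏ r, (x r 0 - x r 1) := by
          rw [IH (fun r j => x r.succ j)]
          rw [Fin.sum_univ_two, Fin.prod_univ_succ]
          simp
          ring
end Exp

/-- for `q ≥ 3`, a `d`-uniform hypergraph `C` on `{1,…,s}` with
`s/2 < d < s` whose edge-removed hypergraph `C*` contains the clutter of partite paths
`𝔠_{s-d-1}(J_{(s-d)×2})` has edge code of minimum distance `(q-2)^{s-d} (q-1)^d`. -/
theorem minDist_edgeCode_uniform_clutter_high_degree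
    (q s d : ℕ) (hq : 3 ≤ q) (hlow : s < 2 * d) (hhigh : d < s)
    (K : Type) [Field K] [Fintype K] (hK : Fintype.card K = q)
    (E : Finset (Finset (Fin s)))
    (huniform : ∀ e ∈ E, e.card = d)
    (hclutter : ContainsPartitePathClutter s (s - d) (E.image fun e => eᶜ)) :
    minDist (edgeCode s K (E : Set (Finset (Fin s)))) = (q - 2) ^ (s - d) * (q - 1) ^ d := by
  classical
  subst hK
  obtain ⟨ι, hι, hA⟩ := hclutter
  have hds : d ≤ s := le_of_lt hhigh
  have h2m : 2*(s-d) ≤ s := by omega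
  set A : (Fin (s-d) → Fin 2) → Finset (Fin s) := fun σ =>
    Finset.image (fun r : Fin (s-d) => ι ⟨2*(r:ℕ) + ((σ r : ℕ)),
      by have h1 := r.isLt; have h2 := (σ r).isLt; omega⟩) Finset.univ with hAdef
  have hAE : ∀ σ, (A σ)ᶜ ∈ E := by
    intro σ
    have := hA σ
    rw [Finset.mem_image] at this
    obtain ⟨e, he, hee⟩ := this
    have h5 : A σ = eᶜ := hee.symm
    rw [h5, compl_compl]; exact he
  set f : MvPolynomial (Fin s) K := ∑ σ : Fin (s-d) → Fin 2,
    ((-1:K)^(∑ r, ((σ r : ℕ)))) • ∏ j ∈ (A σ)ᶜ, MvPolynomial.X j with hfdef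
  have hfspan : f ∈ Submodule.span K
      ((fun e : Finset (Fin s) => ∏ j ∈ e, MvPolynomial.X j) '' (E : Set (Finset (Fin s)))) := by
    apply Submodule.sum_mem
    intro σ _
    apply Submodule.smul_mem
    apply Submodule.subset_span
    exact ⟨(A σ)ᶜ, hAE σ, rfl⟩
  set w : Torus s K → K := evalTorus s K f with hwdef
  have hwmem : w ∈ edgeCode s K (E : Set (Finset (Fin s))) :=
    Submodule.mem_map_of_mem hfspan
  -- evaluation formula on the torus
  have heval : ∀ P : Fin s → K, (∀ i, P i ≠ 0) → (MvPolynomial.aeval P) f =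
      (∏ j, P j) * ∏ r : Fin (s-d),
        ((P (ι ⟨2*(r:ℕ), by have := r.isLt; omega⟩))⁻¹ -
         (P (ι ⟨2*(r:ℕ)+1, by have := r.isLt; omega⟩))⁻¹) := by
    intro P hP
    have step1 : (MvPolynomial.aeval P) f =
        ∑ σ : Fin (s-d) → Fin 2, ((-1:K)^(∑ r, ((σ r : ℕ)))) * ∏ j ∈ (A σ)ᶜ, P j := by
      rw [hfdef, map_sum]
      apply Finset.sum_congr rfl
      intro σ _
      rw [map_smul, smul_eq_mul, map_prod]
      simp only [MvPolynomial.aeval_X]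
    have hprodA : ∀ σ : Fin (s-d) → Fin 2, ∏ j ∈ A σ, P j =
        ∏ r : Fin (s-d), P (ι ⟨2*(r:ℕ) + ((σ r : ℕ)),
          by have h1 := r.isLt; have h2 := (σ r).isLt; omega⟩) := by
      intro σ
      rw [hAdef]
      apply Finset.prod_image
      intro r1 _ r2 _ hre
      have := hι hre
      have hv := congrArg Fin.val this
      simp only [Fin.val_mk] at hv
      have b1 := (σ r1).isLt
      have b2 := (σ r2).isLt
      apply Fin.ext
      omega
    have step2 : ∀ σ : Fin (s-d) → Fin 2, ∏ j ∈ (A σ)ᶜ, P j =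
        (∏ j, P j) * ∏ r : Fin (s-d), (P (ι ⟨2*(r:ℕ) + ((σ r : ℕ)),
          by have h1 := r.isLt; have h2 := (σ r).isLt; omega⟩))⁻¹ := by
      intro σ
      have h1 : (∏ j ∈ (A σ)ᶜ, P j) * ∏ j ∈ A σ, P j = ∏ j, P j :=
        Finset.prod_compl_mul_prod (A σ) P
      have h3 : (∏ j ∈ A σ, P j) ≠ 0 :=
        Finset.prod_ne_zero_iff.2 (fun j _ => hP j)
      rw [Finset.prod_inv_distrib, ← hprodA σ]
      field_simp
      linear_combination h1
    rw [step1, Finset.sum_congr rfl (fun σ _ => by rw [step2 σ])]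
    have step3 : ∑ σ : Fin (s-d) → Fin 2, ((-1:K)^(∑ r, ((σ r : ℕ)))) *
        ((∏ j, P j) * ∏ r : Fin (s-d), (P (ι ⟨2*(r:ℕ) + ((σ r : ℕ)),
          by have h1 := r.isLt; have h2 := (σ r).isLt; omega⟩))⁻¹) =
        (∏ j, P j) * ∑ σ : Fin (s-d) → Fin 2, ((-1:K)^(∑ r, ((σ r : ℕ)))) *
          ∏ r : Fin (s-d), (P (ι ⟨2*(r:ℕ) + ((σ r : ℕ)),
            by have h1 := r.isLt; have h2 := (σ r).isLt; omega⟩))⁻¹ := by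
      rw [Finset.mul_sum]
      apply Finset.sum_congr rfl
      intro σ _
      ring
    rw [step3]
    congr 1
    have := exp_lemma (s-d) (fun r (j : Fin 2) => (P (ι ⟨2*(r:ℕ) + (j:ℕ),
      by have h1 := r.isLt; have h2 := j.isLt; omega⟩))⁻¹)
    rw [this]
    apply Finset.prod_congr rfl
    intro r _
    congr 2 <;> apply congrArg <;> apply congrArg <;> apply Fin.ext <;> simp
  -- weight of the constructed codeword
  have hwt : wt w = (Fintype.card K - 2)^(s-d) * (Fintype.card K - 1)^(s-(s-d)) := by
    rw [wt_eq_card w (fun P => (MvPolynomial.aeval P) f) (fun P => rfl)]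
    rw [← count_torus_pairs (K := K) ι h2m hι]
    congr 1
    apply Finset.filter_congr
    intro P _
    constructor
    · rintro ⟨hP1, hP2⟩
      refine ⟨hP1, fun r => ?_⟩
      rw [heval P hP1] at hP2
      have hprod : (∏ r : Fin (s-d),
          ((P (ι ⟨2*(r:ℕ), by have := r.isLt; omega⟩))⁻¹ -
           (P (ι ⟨2*(r:ℕ)+1, by have := r.isLt; omega⟩))⁻¹)) ≠ 0 := by
        intro h0
        rw [h0, mul_zero] at hP2
        exact hP2 rfl
      have := Finset.prod_ne_zero_iff.1 hprod r (Finset.mem_univ r)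
      intro hEq
      apply this
      rw [hEq]
      simp
    · rintro ⟨hP1, hP2⟩
      refine ⟨hP1, ?_⟩
      rw [heval P hP1]
      apply mul_ne_zero
      · exact Finset.prod_ne_zero_iff.2 (fun j _ => hP1 j)
      · apply Finset.prod_ne_zero_iff.2
        intro r _
        rw [sub_ne_zero]
        intro hEq
        rw [inv_inj] at hEq
        exact hP2 r (hEq.symm)
  have hcard3 : 3 ≤ Fintype.card K := hq
  have hbpos : 0 < (Fintype.card K - 2)^(s-d) * (Fintype.card K - 1)^(s-(s-d)) :=
    Nat.mul_pos (pow_pos (by omega) _) (pow_pos (by omega) _)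
  have hw0 : w ≠ 0 := by
    intro h0
    rw [h0] at hwt
    have hz : wt (0 : Torus s K → K) = 0 := by
      unfold wt
      have he : {P : Torus s K | (0 : Torus s K → K) P ≠ 0} = ∅ := by ext P; simp
      rw [he, Set.ncard_empty]
    omega
  -- lower bound for every nonzero codeword
  have hlb : ∀ v, v ∈ edgeCode s K (E : Set (Finset (Fin s))) → v ≠ 0 →
      (Fintype.card K - 2)^(s-d) * (Fintype.card K - 1)^(s-(s-d)) ≤ wt v := by
    intro v hv hv0
    obtain ⟨g, hg, rfl⟩ := hv
    obtain ⟨c, hcsupp, hceval⟩ := codeword_phi (E : Set (Finset (Fin s))) d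
      (fun e he => huniform e he) g hg
    have hwtv : wt (evalTorus s K g) = Ncnt c := by
      rw [wt_eq_card (evalTorus s K g) (fun P => (MvPolynomial.aeval P) g) (fun P => rfl)]
      unfold Ncnt
      congr 1
      apply Finset.filter_congr
      intro P _
      constructor
      · rintro ⟨h1, h2⟩
        exact ⟨h1, by rw [← hceval]; exact h2⟩
      · rintro ⟨h1, h2⟩
        exact ⟨h1, by rw [hceval]; exact h2⟩
    have hc0 : c ≠ 0 := by
      intro h0
      apply hv0
      funext P
      show (MvPolynomial.aeval P.1) g = 0
      rw [hceval]
      rw [h0]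
      unfold Phi
      simp
    rw [hwtv]
    have := keyB s d c hc0 hcsupp hds (by omega)
    have hsd : s - (s - d) = d := by omega
    rwa [hsd]
  -- conclude
  have hmem : (Fintype.card K - 2)^(s-d) * (Fintype.card K - 1)^(s-(s-d)) ∈
      {n : ℕ | ∃ c ∈ edgeCode s K (E : Set (Finset (Fin s))), c ≠ 0 ∧ wt c = n} :=
    ⟨w, hwmem, hw0, hwt⟩
  have hsd : s - (s - d) = d := by omega
  have hgoal : (Fintype.card K - 2)^(s-d) * (Fintype.card K - 1)^d =
      (Fintype.card K - 2)^(s-d) * (Fintype.card K - 1)^(s-(s-d)) := by rw [hsd]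
  rw [hgoal]
  unfold minDist
  apply le_antisymm
  · exact Nat.sInf_le hmem
  · apply le_csInf ⟨_, hmem⟩
    rintro b ⟨v, hv, hv0, rfl⟩
    exact hlb v hv hv0
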